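/- Let U be a unitary operator on a complex Hilbert space H_U of finite multiplicity, meaning there exist finitely many vectors x₁, …, x_n ∈ H_U such that H_U is the orthogonal direct sum of the cyclic subspaces Z_i = closed linear span of {U^k x_i : k ∈ ℤ}, i = 1, …, n. If Y ⊆ H_U is a closed subspace reducing U (invariant under U and U*) such that the restriction U|Y is unitarily equivalent to U, then Y = H_U. -/

import Mathlib

noncomputable section
namespace Stmt10Aux


open Finset

variable {H : Type*} [NormedAddCommGroup H] [InnerProductSpace ℂ H]

local notation "⟪" x ", " y "⟫" => @inner ℂ _ _ x y

lemma proj_bound {n : ℕ} (ξ : Fin n → H) (z y : Fin (n + 1) → H) (g : ℝ)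
    (hz : ∀ k l, k ≠ l → ⟪z k, z l⟫ = 0)
    (hg : ∀ k, ⟪z k, z k⟫ = (g : ℂ))
    (hy : ∀ k, y k ∈ Submodule.span ℂ (Set.range ξ)) :
    g ≤ ∑ k, ‖z k - y k‖ ^ 2 := by
  have hnorm : ∀ k, ‖z k‖ ^ 2 = g := by
    intro k
    have h1 := inner_self_eq_norm_sq (𝕜 := ℂ) (z k)
    rw [hg k] at h1
    simpa using h1.symm
  have hgnn : 0 ≤ g := by rw [← hnorm 0]; positivity
  rcases eq_or_lt_of_le hgnn with hg0 | hgpos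
  · rw [← hg0]; positivity
  set V := Submodule.span ℂ (Set.range ξ) with hV
  haveI : FiniteDimensional ℂ V := FiniteDimensional.span_of_finite ℂ (Set.finite_range ξ)
  have key1 : ∀ k, g - ‖(V.orthogonalProjectionOnto (z k) : H)‖ ^ 2 ≤ ‖z k - y k‖ ^ 2 := by
    intro k
    set P := (V.orthogonalProjectionOnto (z k) : H) with hP
    have hsub : z k - P ∈ Vᗮ := V.sub_starProjection_mem_orthogonal (z k)
    have hdecomp : z k - y k = (z k - P) + (P - y k) := by abel
    have hPy : P - y k ∈ V := sub_mem (Submodule.coe_mem _) (hy k)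
    have hinner : ⟪z k - P, P - y k⟫ = 0 :=
      Submodule.inner_left_of_mem_orthogonal hPy hsub
    have hpyth : ‖z k - y k‖ ^ 2 = ‖z k - P‖ ^ 2 + ‖P - y k‖ ^ 2 := by
      rw [hdecomp, norm_add_sq (𝕜 := ℂ), hinner]; simp
    have hPV : P ∈ V := Submodule.coe_mem _
    have hinner2 : ⟪z k - P, P⟫ = 0 :=
      Submodule.inner_left_of_mem_orthogonal hPV hsub
    have hpyth2 : ‖z k‖ ^ 2 = ‖z k - P‖ ^ 2 + ‖P‖ ^ 2 := by
      calc ‖z k‖ ^ 2 = ‖(z k - P) + P‖ ^ 2 := by rw [sub_add_cancel]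
        _ = ‖z k - P‖ ^ 2 + ‖P‖ ^ 2 := by rw [norm_add_sq (𝕜 := ℂ), hinner2]; simp
    nlinarith [sq_nonneg ‖P - y k‖, hnorm k]
  have key2 : ∑ k, ‖(V.orthogonalProjectionOnto (z k) : H)‖ ^ 2 ≤ n * g := by
    set c : ℂ := (((Real.sqrt g)⁻¹ : ℝ) : ℂ) with hc
    have hgC : (g : ℂ) ≠ 0 := by
      simp only [ne_eq, Complex.ofReal_eq_zero]
      exact ne_of_gt hgpos
    have hcnorm : ‖c‖ = (Real.sqrt g)⁻¹ := by
      rw [hc, Complex.norm_real, Real.norm_eq_abs, abs_of_nonneg (by positivity)]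
    have hcc : c * (starRingEnd ℂ) c = ((g : ℂ))⁻¹ := by
      rw [hc, Complex.conj_ofReal, ← Complex.ofReal_mul, ← mul_inv,
        Real.mul_self_sqrt hgnn, Complex.ofReal_inv]
    set u : Fin (n + 1) → H := fun k => c • z k with hu
    have huon : Orthonormal ℂ u := by
      rw [orthonormal_iff_ite]
      intro k l
      by_cases hkl : k = l
      · subst hkl
        simp only [hu, inner_smul_left, inner_smul_right, if_pos rfl]
        rw [hg k, ← mul_assoc, hcc]
        exact inv_mul_cancel₀ hgC
      · simp only [hu, inner_smul_left, inner_smul_right, if_neg hkl, hz k l hkl, mul_zero]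
    have hfr : Module.finrank ℂ V ≤ n := by
      classical
      have h1 := finrank_span_le_card (R := ℂ) (Set.range ξ)
      have h2 : (Set.range ξ).toFinset.card ≤ n := by
        rw [Set.toFinset_card]
        simpa using Fintype.card_range_le ξ
      exact h1.trans h2
    set b := stdOrthonormalBasis ℂ V with hb
    have hbO : Orthonormal ℂ (fun r => ((b r : V) : H)) := by
      rw [orthonormal_iff_ite]
      intro r s
      have := orthonormal_iff_ite.mp b.orthonormal r s
      rwa [Submodule.coe_inner] at this
    have hnormP : ∀ k, ‖(V.orthogonalProjectionOnto (z k) : H)‖ ^ 2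
        = ∑ r, ‖⟪((b r : V) : H), z k⟫‖ ^ 2 := by
      intro k
      have hrepr : (V.orthogonalProjectionOnto (z k) : H)
          = ∑ r, ⟪((b r : V) : H), z k⟫ • ((b r : V) : H) := by
        have := b.orthogonalProjectionOnto_apply_eq_sum (z k)
        calc (V.orthogonalProjectionOnto (z k) : H)
            = ((∑ r, ⟪((b r : V) : H), z k⟫ • b r : V) : H) := by rw [← this]
          _ = ∑ r, ⟪((b r : V) : H), z k⟫ • ((b r : V) : H) := by
              push_cast
              rfl
      have h2 := hbO.inner_sum (fun r => ⟪((b r : V) : H), z k⟫)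
        (fun r => ⟪((b r : V) : H), z k⟫) Finset.univ
      have h3 : ‖(V.orthogonalProjectionOnto (z k) : H)‖ ^ 2
          = RCLike.re (∑ r, (starRingEnd ℂ) ⟪((b r : V) : H), z k⟫ * ⟪((b r : V) : H), z k⟫) := by
        rw [← inner_self_eq_norm_sq (𝕜 := ℂ)]
        rw [hrepr]
        rw [h2]
      rw [h3, map_sum]
      exact Finset.sum_congr rfl fun r _ => by
        rw [RCLike.conj_mul]
        norm_num
        simp [← Complex.ofReal_pow]
    rw [Finset.sum_congr rfl (fun k _ => hnormP k)]
    rw [Finset.sum_comm]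
    have hbessel : ∀ r, ∑ k, ‖⟪((b r : V) : H), z k⟫‖ ^ 2 ≤ g := by
      intro r
      have h1 : ∀ k, ‖⟪((b r : V) : H), z k⟫‖ ^ 2 = g * ‖⟪u k, ((b r : V) : H)⟫‖ ^ 2 := by
        intro k
        have : ⟪u k, ((b r : V) : H)⟫ = (starRingEnd ℂ) c * ⟪z k, ((b r : V) : H)⟫ := by
          rw [hu]; exact inner_smul_left _ _ _
        rw [this, norm_mul, mul_pow]
        have hcs : ‖(starRingEnd ℂ) c‖ = (Real.sqrt g)⁻¹ := by
          rw [RCLike.norm_conj, hcnorm]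
        rw [hcs, norm_inner_symm (z k)]
        have : ((Real.sqrt g)⁻¹) ^ 2 = g⁻¹ := by
          rw [← Real.sqrt_inv, Real.sq_sqrt (by positivity)]
        rw [this]
        field_simp
      rw [Finset.sum_congr rfl (fun k _ => h1 k), ← Finset.mul_sum]
      have hb2 : ∑ k, ‖⟪u k, ((b r : V) : H)⟫‖ ^ 2 ≤ ‖((b r : V) : H)‖ ^ 2 :=
        huon.sum_inner_products_le (x := ((b r : V) : H)) (s := Finset.univ)
      have hbn : ‖((b r : V) : H)‖ = 1 := by
        have := hbO.1 r
        simpa using this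
      rw [hbn] at hb2
      calc g * ∑ k, ‖⟪u k, ((b r : V) : H)⟫‖ ^ 2 ≤ g * 1 :=
            mul_le_mul_of_nonneg_left (by simpa using hb2) (le_of_lt hgpos)
        _ = g := mul_one g
    calc ∑ r, ∑ k, ‖⟪((b r : V) : H), z k⟫‖ ^ 2 ≤ ∑ _r : Fin (Module.finrank ℂ V), g :=
          Finset.sum_le_sum (fun r _ => hbessel r)
      _ = (Module.finrank ℂ V : ℝ) * g := by simp [mul_comm]
      _ ≤ n * g := by
          apply mul_le_mul_of_nonneg_right _ hgnn
          exact_mod_cast hfr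
  have h1 : ∑ k : Fin (n+1), (g - ‖(V.orthogonalProjectionOnto (z k) : H)‖ ^ 2)
      ≤ ∑ k, ‖z k - y k‖ ^ 2 :=
    Finset.sum_le_sum (fun k _ => key1 k)
  rw [Finset.sum_sub_distrib] at h1
  simp only [Finset.sum_const, Finset.card_univ, Fintype.card_fin, nsmul_eq_mul] at h1
  push_cast at h1
  linarith [key2]



def om (N : ℕ) : ℂ := Complex.exp (2 * Real.pi * Complex.I / N)

lemma om_ne_zero (N : ℕ) : om N ≠ 0 := Complex.exp_ne_zero _

lemma om_eq (N : ℕ) : om N = Complex.exp ((2 * Real.pi / N : ℝ) * Complex.I) := by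
  unfold om; congr 1; push_cast; ring

lemma om_abs (N : ℕ) : ‖om N‖ = 1 := by
  rw [om_eq, Complex.norm_exp_ofReal_mul_I]

lemma om_norm (N : ℕ) : ‖om N‖ = 1 := by
  rw [om_abs]

lemma om_zpow_norm (N : ℕ) (m : ℤ) : ‖om N ^ m‖ = 1 := by
  rw [norm_zpow, om_norm, one_zpow]

lemma om_conj (N : ℕ) (m : ℤ) :
    (starRingEnd ℂ) (om N ^ m) = om N ^ (-m) := by
  rw [map_zpow₀, ← Complex.inv_eq_conj (om_abs N), inv_zpow, zpow_neg]

variable {H : Type*} [NormedAddCommGroup H] [InnerProductSpace ℂ H]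


lemma zpow_add_apply (U : H ≃ₗᵢ[ℂ] H) (a b : ℤ) (w : H) :
    (U ^ (a + b)) w = (U ^ a) ((U ^ b) w) := by
  rw [zpow_add]; rfl

/-- The smoothing operator `D_j w = ∑_{a<N} ω^{-aj} U^a w`. -/
def DL (U : H ≃ₗᵢ[ℂ] H) (N : ℕ) (j : ℕ) (w : H) : H :=
  ∑ a ∈ Finset.range N, om N ^ (-((a : ℤ) * (j : ℤ))) • ((U ^ (a : ℤ)) w)

lemma DL_smul (U : H ≃ₗᵢ[ℂ] H) (N j : ℕ) (c : ℂ) (w : H) :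
    DL U N j (c • w) = c • DL U N j w := by
  unfold DL
  rw [Finset.smul_sum]
  refine Finset.sum_congr rfl fun a _ => ?_
  rw [map_smul, smul_comm]

lemma DL_sub (U : H ≃ₗᵢ[ℂ] H) (N j : ℕ) (w w' : H) :
    DL U N j (w - w') = DL U N j w - DL U N j w' := by
  unfold DL
  rw [← Finset.sum_sub_distrib]
  refine Finset.sum_congr rfl fun a _ => ?_
  rw [map_sub, smul_sub]

lemma DL_sum {ι : Type*} (U : H ≃ₗᵢ[ℂ] H) (N j : ℕ) (s : Finset ι) (f : ι → ℂ) (u : ι → H) :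
    DL U N j (∑ p ∈ s, f p • u p) = ∑ p ∈ s, f p • DL U N j (u p) := by
  classical
  induction s using Finset.induction with
  | empty =>
      simp only [Finset.sum_empty]
      unfold DL
      simp
  | insert _ _ hns ih =>
      rw [Finset.sum_insert hns, Finset.sum_insert hns, ← ih]
      have hadd : ∀ w w' : H, DL U N j (w + w') = DL U N j w + DL U N j w' := by
        intro w w'
        unfold DL
        rw [← Finset.sum_add_distrib]
        refine Finset.sum_congr rfl fun a _ => ?_
        rw [map_add, smul_add]
      rw [hadd, DL_smul]

lemma DL_comm (U : H ≃ₗᵢ[ℂ] H) (N j : ℕ) (m : ℤ) (w : H) :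
    DL U N j ((U ^ m) w) = (U ^ m) (DL U N j w) := by
  unfold DL
  rw [map_sum]
  refine Finset.sum_congr rfl fun a _ => ?_
  rw [map_smul]
  congr 1
  rw [← zpow_add_apply, ← zpow_add_apply, add_comm]

lemma DL_inner (U : H ≃ₗᵢ[ℂ] H) (N j : ℕ) (u w : H) :
    ⟪DL U N j u, DL U N j w⟫ = ∑ a ∈ Finset.range N, ∑ b ∈ Finset.range N,
      om N ^ (((a : ℤ) - b) * j) * ⟪(U ^ (a : ℤ)) u, (U ^ (b : ℤ)) w⟫ := by
  unfold DL
  rw [sum_inner]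
  refine Finset.sum_congr rfl fun a _ => ?_
  rw [inner_sum]
  refine Finset.sum_congr rfl fun b _ => ?_
  rw [inner_smul_left, inner_smul_right, om_conj, ← mul_assoc, ← zpow_add₀ (om_ne_zero N)]
  have : - -((a : ℤ) * j) + -((b : ℤ) * j) = ((a : ℤ) - b) * j := by ring
  rw [this]

lemma sum_om_zpow (N : ℕ) (hN : N ≠ 0) (m : ℤ) (hm : m.natAbs < N) :
    ∑ j ∈ Finset.range N, om N ^ (m * (j : ℤ)) = if m = 0 then (N : ℂ) else 0 := by
  by_cases hm0 : m = 0
  · simp [hm0]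
  · rw [if_neg hm0]
    have hterm : ∀ j : ℕ, om N ^ (m * (j : ℤ)) = (om N ^ m) ^ j := by
      intro j
      rw [zpow_mul, zpow_natCast]
    rw [Finset.sum_congr rfl fun j _ => hterm j]
    have hr1 : om N ^ m ≠ 1 := by
      intro h
      have h2 := ((Complex.isPrimitiveRoot_exp N hN).zpow_eq_one_iff_dvd m).mp h
      exact hm0 (Int.eq_zero_of_dvd_of_natAbs_lt_natAbs h2 (by simpa using hm))
    rw [geom_sum_eq hr1]
    have hNone : om N ^ N = 1 := by
      unfold om
      exact (Complex.isPrimitiveRoot_exp N hN).pow_eq_one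
    have hrN : (om N ^ m) ^ N = 1 := by
      rw [← zpow_natCast (om N ^ m) N, ← zpow_mul, mul_comm, zpow_mul, zpow_natCast,
        hNone, one_zpow]
    rw [hrN]
    simp

lemma DL_sum_inner (U : H ≃ₗᵢ[ℂ] H) (N : ℕ) (hN : N ≠ 0) (u w : H) :
    ∑ j ∈ Finset.range N, ⟪DL U N j u, DL U N j w⟫ = (N : ℂ) * N * ⟪u, w⟫ := by
  rw [Finset.sum_congr rfl fun j _ => DL_inner U N j u w]
  rw [Finset.sum_comm]
  rw [Finset.sum_congr rfl fun a _ => Finset.sum_comm]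
  have hinner : ∀ a b : ℕ, a ∈ range N → b ∈ range N →
      ∑ j ∈ range N, om N ^ (((a : ℤ) - b) * j) * ⟪(U ^ (a : ℤ)) u, (U ^ (b : ℤ)) w⟫
      = (if ((a : ℤ) - b) = 0 then (N : ℂ) else 0) * ⟪(U ^ (a : ℤ)) u, (U ^ (b : ℤ)) w⟫ := by
    intro a b ha hb
    rw [← Finset.sum_mul]
    congr 1
    apply sum_om_zpow N hN
    have ha' := Finset.mem_range.mp ha
    have hb' := Finset.mem_range.mp hb
    omega
  calc ∑ a ∈ range N, ∑ b ∈ range N, ∑ j ∈ range N,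
        om N ^ (((a : ℤ) - b) * j) * ⟪(U ^ (a : ℤ)) u, (U ^ (b : ℤ)) w⟫
      = ∑ a ∈ range N, ∑ b ∈ range N,
        (if ((a : ℤ) - b) = 0 then (N : ℂ) else 0) * ⟪(U ^ (a : ℤ)) u, (U ^ (b : ℤ)) w⟫ := by
        refine Finset.sum_congr rfl fun a ha => Finset.sum_congr rfl fun b hb => ?_
        exact hinner a b ha hb
    _ = ∑ a ∈ range N, (N : ℂ) * ⟪u, w⟫ := by
        refine Finset.sum_congr rfl fun a ha => ?_
        have hzero : ∀ b ∈ range N, b ≠ a →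
            (if ((a : ℤ) - b) = 0 then (N : ℂ) else 0) * ⟪(U ^ (a : ℤ)) u, (U ^ (b : ℤ)) w⟫ = 0 := by
          intro b _ hba
          have hne : ¬ ((a : ℤ) - b = 0) := by
            intro hab
            have h' : (a : ℤ) = b := sub_eq_zero.mp hab
            exact hba (by exact_mod_cast h'.symm)
          rw [if_neg hne, zero_mul]
        rw [Finset.sum_eq_single_of_mem a ha hzero, if_pos (sub_self ((a : ℕ) : ℤ)),
          LinearIsometryEquiv.inner_map_map]
    _ = (N : ℂ) * N * ⟪u, w⟫ := by
        rw [Finset.sum_const, Finset.card_range]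
        rw [nsmul_eq_mul]
        ring

lemma DL_sum_norm (U : H ≃ₗᵢ[ℂ] H) (N : ℕ) (hN : N ≠ 0) (u : H) :
    ∑ j ∈ Finset.range N, ‖DL U N j u‖ ^ 2 = (N : ℝ) ^ 2 * ‖u‖ ^ 2 := by
  calc ∑ j ∈ Finset.range N, ‖DL U N j u‖ ^ 2
      = ∑ j ∈ Finset.range N, RCLike.re ⟪DL U N j u, DL U N j u⟫ := by
        refine Finset.sum_congr rfl fun j _ => (inner_self_eq_norm_sq _).symm
    _ = RCLike.re (∑ j ∈ Finset.range N, ⟪DL U N j u, DL U N j u⟫) := (map_sum _ _ _).symm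
    _ = RCLike.re ((N : ℂ) * N * ⟪u, u⟫) := by rw [DL_sum_inner U N hN u u]
    _ = (N : ℝ) ^ 2 * ‖u‖ ^ 2 := by
        rw [inner_self_eq_norm_sq_to_K, RCLike.re_to_complex]
        show ((N : ℂ) * N * ((‖u‖ : ℝ) : ℂ) ^ 2).re = (N : ℝ) ^ 2 * ‖u‖ ^ 2
        have : ((N : ℂ) * N * ((‖u‖ : ℝ) : ℂ) ^ 2)
            = (((N : ℝ) ^ 2 * ‖u‖ ^ 2 : ℝ) : ℂ) := by
          push_cast
          ring
        rw [this, Complex.ofReal_re]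


lemma DL_U_step (U : H ≃ₗᵢ[ℂ] H) (N j : ℕ) (w : H) :
    ‖U (DL U N j w) - om N ^ (j : ℤ) • DL U N j w‖ ≤ 2 * ‖w‖ := by
  set h : ℕ → H := fun a => om N ^ ((1 - (a : ℤ)) * j) • (U ^ (a : ℤ)) w with hh
  have hnorm : ∀ a, ‖h a‖ = ‖w‖ := by
    intro a
    rw [hh]
    simp only []
    rw [norm_smul, om_zpow_norm, one_mul, LinearIsometryEquiv.norm_map]
  have e1 : U (DL U N j w) = ∑ a ∈ Finset.range N, h (a + 1) := by
    unfold DL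
    rw [map_sum]
    refine Finset.sum_congr rfl fun a _ => ?_
    rw [map_smul, hh]
    simp only []
    have hexp : (1 - ((a + 1 : ℕ) : ℤ)) * j = -((a : ℤ) * j) := by push_cast; ring
    rw [hexp]
    congr 1
    have hc : ((a + 1 : ℕ) : ℤ) = 1 + (a : ℤ) := by push_cast; ring
    rw [hc, zpow_add_apply, zpow_one]
  have e2 : om N ^ (j : ℤ) • DL U N j w = ∑ a ∈ Finset.range N, h a := by
    unfold DL
    rw [Finset.smul_sum]
    refine Finset.sum_congr rfl fun a _ => ?_
    rw [smul_smul, ← zpow_add₀ (om_ne_zero N), hh]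
    simp only []
    congr 2
    ring
  have s1 := Finset.sum_range_succ' h N
  have s2 := Finset.sum_range_succ h N
  rw [s2] at s1
  have e3 : (∑ a ∈ Finset.range N, h (a + 1))
      = (∑ a ∈ Finset.range N, h a) + h N - h 0 := eq_sub_of_add_eq s1.symm
  have e4 : U (DL U N j w) - om N ^ (j : ℤ) • DL U N j w = h N - h 0 := by
    rw [e1, e2, e3]; abel
  rw [e4]
  calc ‖h N - h 0‖ ≤ ‖h N‖ + ‖h 0‖ := norm_sub_le _ _
    _ = 2 * ‖w‖ := by rw [hnorm, hnorm]; ring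

lemma DL_Usymm_step (U : H ≃ₗᵢ[ℂ] H) (N j : ℕ) (w : H) :
    ‖U.symm (DL U N j w) - om N ^ (-(j : ℤ)) • DL U N j w‖ ≤ 2 * ‖w‖ := by
  have e : U (U.symm (DL U N j w) - om N ^ (-(j : ℤ)) • DL U N j w)
      = om N ^ (-(j : ℤ)) • (om N ^ ((j : ℤ)) • DL U N j w - U (DL U N j w)) := by
    rw [map_sub, LinearIsometryEquiv.apply_symm_apply, map_smul, smul_sub, smul_smul,
      ← zpow_add₀ (om_ne_zero N)]
    have hz : -(j : ℤ) + (j : ℤ) = 0 := by ring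
    rw [hz, zpow_zero, one_smul]
  calc ‖U.symm (DL U N j w) - om N ^ (-(j : ℤ)) • DL U N j w‖
      = ‖U (U.symm (DL U N j w) - om N ^ (-(j : ℤ)) • DL U N j w)‖ :=
        (LinearIsometryEquiv.norm_map U _).symm
    _ = ‖om N ^ (-(j : ℤ)) • (om N ^ ((j : ℤ)) • DL U N j w - U (DL U N j w))‖ := by rw [e]
    _ = ‖om N ^ ((j : ℤ)) • DL U N j w - U (DL U N j w)‖ := by
        rw [norm_smul, om_zpow_norm, one_mul]
    _ = ‖U (DL U N j w) - om N ^ ((j : ℤ)) • DL U N j w‖ := norm_sub_rev _ _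
    _ ≤ 2 * ‖w‖ := DL_U_step U N j w

lemma DL_zpow_bound (U : H ≃ₗᵢ[ℂ] H) (N j : ℕ) (w : H) (m : ℤ) :
    ‖(U ^ m) (DL U N j w) - om N ^ (m * j) • DL U N j w‖ ≤ 2 * (m.natAbs : ℝ) * ‖w‖ := by
  induction m using Int.induction_on with
  | zero => simp
  | succ i ih =>
      have e1 : (U ^ ((i : ℤ) + 1)) (DL U N j w) = U ((U ^ (i : ℤ)) (DL U N j w)) := by
        rw [add_comm, zpow_add_apply, zpow_one]
      have e2 : om N ^ (((i : ℤ) + 1) * j) • DL U N j w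
          = om N ^ ((i : ℤ) * j) • (om N ^ ((j : ℤ)) • DL U N j w) := by
        rw [smul_smul, ← zpow_add₀ (om_ne_zero N)]
        congr 2
        ring
      have tri : ‖(U ^ ((i : ℤ) + 1)) (DL U N j w) - om N ^ (((i : ℤ) + 1) * j) • DL U N j w‖
          ≤ ‖U ((U ^ (i : ℤ)) (DL U N j w)) - U (om N ^ ((i : ℤ) * j) • DL U N j w)‖
            + ‖U (om N ^ ((i : ℤ) * j) • DL U N j w) - om N ^ (((i : ℤ) + 1) * j) • DL U N j w‖ := by
        rw [e1]
        exact norm_sub_le_norm_sub_add_norm_sub _ _ _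
      have b1 : ‖U ((U ^ (i : ℤ)) (DL U N j w)) - U (om N ^ ((i : ℤ) * j) • DL U N j w)‖
          ≤ 2 * (i : ℝ) * ‖w‖ := by
        rw [← map_sub, LinearIsometryEquiv.norm_map]
        have := ih
        rwa [Int.natAbs_natCast] at this
      have b2 : ‖U (om N ^ ((i : ℤ) * j) • DL U N j w) - om N ^ (((i : ℤ) + 1) * j) • DL U N j w‖
          ≤ 2 * ‖w‖ := by
        rw [e2, map_smul, ← smul_sub, norm_smul, om_zpow_norm, one_mul]
        exact DL_U_step U N j w
      have hna : (((i : ℤ) + 1).natAbs : ℝ) = (i : ℝ) + 1 := by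
        have : ((i : ℤ) + 1) = ((i + 1 : ℕ) : ℤ) := by push_cast; ring
        rw [this, Int.natAbs_natCast]
        push_cast; ring
      rw [hna]
      calc ‖(U ^ ((i : ℤ) + 1)) (DL U N j w) - om N ^ (((i : ℤ) + 1) * j) • DL U N j w‖
          ≤ 2 * (i : ℝ) * ‖w‖ + 2 * ‖w‖ := le_trans tri (add_le_add b1 b2)
        _ = 2 * ((i : ℝ) + 1) * ‖w‖ := by ring
  | pred i ih =>
      have e1 : (U ^ (-(i : ℤ) - 1)) (DL U N j w) = U.symm ((U ^ (-(i : ℤ))) (DL U N j w)) := by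
        have : (-(i : ℤ) - 1) = (-1) + (-(i : ℤ)) := by ring
        rw [this, zpow_add_apply]
        rfl
      have e2 : om N ^ ((-(i : ℤ) - 1) * j) • DL U N j w
          = om N ^ (-(i : ℤ) * j) • (om N ^ (-(j : ℤ)) • DL U N j w) := by
        rw [smul_smul, ← zpow_add₀ (om_ne_zero N)]
        congr 2
        ring
      have tri : ‖(U ^ (-(i : ℤ) - 1)) (DL U N j w) - om N ^ ((-(i : ℤ) - 1) * j) • DL U N j w‖
          ≤ ‖U.symm ((U ^ (-(i : ℤ))) (DL U N j w)) - U.symm (om N ^ (-(i : ℤ) * j) • DL U N j w)‖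
            + ‖U.symm (om N ^ (-(i : ℤ) * j) • DL U N j w)
                - om N ^ ((-(i : ℤ) - 1) * j) • DL U N j w‖ := by
        rw [e1]
        exact norm_sub_le_norm_sub_add_norm_sub _ _ _
      have b1 : ‖U.symm ((U ^ (-(i : ℤ))) (DL U N j w)) - U.symm (om N ^ (-(i : ℤ) * j) • DL U N j w)‖
          ≤ 2 * (i : ℝ) * ‖w‖ := by
        rw [← map_sub, LinearIsometryEquiv.norm_map]
        have := ih
        rwa [Int.natAbs_neg, Int.natAbs_natCast] at this
      have b2 : ‖U.symm (om N ^ (-(i : ℤ) * j) • DL U N j w)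
          - om N ^ ((-(i : ℤ) - 1) * j) • DL U N j w‖ ≤ 2 * ‖w‖ := by
        rw [e2, map_smul, ← smul_sub, norm_smul, om_zpow_norm, one_mul]
        exact DL_Usymm_step U N j w
      have hna : (((-(i : ℤ) - 1)).natAbs : ℝ) = (i : ℝ) + 1 := by
        have : (-(i : ℤ) - 1) = -((i + 1 : ℕ) : ℤ) := by push_cast; ring
        rw [this, Int.natAbs_neg, Int.natAbs_natCast]
        push_cast; ring
      rw [hna]
      calc ‖(U ^ (-(i : ℤ) - 1)) (DL U N j w) - om N ^ ((-(i : ℤ) - 1) * j) • DL U N j w‖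
          ≤ 2 * (i : ℝ) * ‖w‖ + 2 * ‖w‖ := le_trans tri (add_le_add b1 b2)
        _ = 2 * ((i : ℝ) + 1) * ‖w‖ := by ring


lemma main_contra {n : ℕ} (U : H ≃ₗᵢ[ℂ] H) (x : Fin n → H) (v : ℕ → H)
    (h1 : ∀ (k : ℕ) (a b : ℤ), ⟪(U ^ a) (v k), (U ^ b) (v k)⟫ = ⟪(U ^ a) (v 0), (U ^ b) (v 0)⟫)
    (h2 : ∀ (k l : ℕ), k ≠ l → ∀ (a b : ℤ), ⟪(U ^ a) (v k), (U ^ b) (v l)⟫ = 0)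
    (h3 : ‖v 0‖ = 1)
    (h4 : ∀ (k : ℕ) (δ : ℝ), 0 < δ → ∃ (F : Finset ℤ) (q : Fin n → ℤ → ℂ),
      ‖v k - ∑ i, ∑ m ∈ F, q i m • (U ^ m) (x i)‖ ≤ δ) :
    False := by
  classical
  set δ : ℝ := 1 / (4 * (n + 1)) with hδdef
  have hδ : 0 < δ := by positivity
  choose F q hq using fun k : ℕ => h4 k δ hδ
  set C : ℕ → ℝ := fun k => ∑ i, ∑ m ∈ F k, ‖q k i m‖ * (2 * (m.natAbs : ℝ) * ‖x i‖) with hCdef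
  have hCnn : ∀ k, 0 ≤ C k := by
    intro k
    apply Finset.sum_nonneg
    intro i _
    apply Finset.sum_nonneg
    intro m _
    positivity
  set B : ℝ := ∑ k : Fin (n + 1), (C (k : ℕ)) ^ 2 with hBdef
  have hBnn : 0 ≤ B := Finset.sum_nonneg fun k _ => sq_nonneg _
  set N : ℕ := ⌈4 * B⌉₊ + 1 with hNdef
  have hNpos : 0 < N := Nat.succ_pos _
  have hNne : N ≠ 0 := Nat.pos_iff_ne_zero.mp hNpos
  have hNB : 4 * B < (N : ℝ) := by
    have h := Nat.le_ceil (4 * B)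
    have : ((⌈4 * B⌉₊ : ℝ)) < (N : ℝ) := by
      rw [hNdef]; push_cast; linarith
    linarith
  set wv : ℕ → H := fun k => ∑ i, ∑ m ∈ F k, q k i m • (U ^ m) (x i) with hwvdef
  set c : ℕ → Fin n → ℕ → ℂ := fun k i j => ∑ m ∈ F k, q k i m * om N ^ (m * (j : ℤ)) with hcdef
  -- approximation of the smoothed vector by pointwise combinations
  have hML4 : ∀ (k : ℕ) (j : ℕ),
      ‖DL U N j (wv k) - ∑ i, c k i j • DL U N j (x i)‖ ≤ C k := by
    intro k j
    have e1 : DL U N j (wv k)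
        = ∑ p ∈ (Finset.univ ×ˢ F k), q k p.1 p.2 • DL U N j ((U ^ p.2) (x p.1)) := by
      rw [hwvdef]
      simp only []
      rw [← Finset.sum_product']
      exact DL_sum U N j _ _ _
    have e2 : (∑ i, c k i j • DL U N j (x i))
        = ∑ p ∈ (Finset.univ ×ˢ F k), (q k p.1 p.2 * om N ^ (p.2 * (j : ℤ))) • DL U N j (x p.1) := by
      rw [Finset.sum_product]
      refine Finset.sum_congr rfl fun i _ => ?_
      rw [hcdef]
      simp only []
      rw [Finset.sum_smul]
    rw [e1, e2, ← Finset.sum_sub_distrib]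
    have e3 : ∀ p ∈ (Finset.univ ×ˢ F k),
        q k p.1 p.2 • DL U N j ((U ^ p.2) (x p.1))
          - (q k p.1 p.2 * om N ^ (p.2 * (j : ℤ))) • DL U N j (x p.1)
        = q k p.1 p.2 • ((U ^ p.2) (DL U N j (x p.1)) - om N ^ (p.2 * (j : ℤ)) • DL U N j (x p.1)) := by
      intro p _
      rw [smul_sub, DL_comm, mul_smul]
    rw [Finset.sum_congr rfl e3]
    calc ‖∑ p ∈ (Finset.univ ×ˢ F k), q k p.1 p.2 •
            ((U ^ p.2) (DL U N j (x p.1)) - om N ^ (p.2 * (j : ℤ)) • DL U N j (x p.1))‖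
        ≤ ∑ p ∈ (Finset.univ ×ˢ F k), ‖q k p.1 p.2 •
            ((U ^ p.2) (DL U N j (x p.1)) - om N ^ (p.2 * (j : ℤ)) • DL U N j (x p.1))‖ :=
          norm_sum_le _ _
      _ ≤ ∑ p ∈ (Finset.univ ×ˢ F k), ‖q k p.1 p.2‖ * (2 * ((p.2.natAbs : ℝ)) * ‖x p.1‖) := by
          refine Finset.sum_le_sum fun p _ => ?_
          rw [norm_smul]
          exact mul_le_mul_of_nonneg_left (DL_zpow_bound U N j (x p.1) p.2) (norm_nonneg _)
      _ = C k := by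
          rw [hCdef]
          simp only []
          rw [Finset.sum_product]
  -- orthogonality and equal norms of smoothed vectors
  have horthoDL : ∀ (j : ℕ) (k l : ℕ), k ≠ l → ⟪DL U N j (v k), DL U N j (v l)⟫ = 0 := by
    intro j k l hkl
    rw [DL_inner]
    refine Finset.sum_eq_zero fun a _ => Finset.sum_eq_zero fun b _ => ?_
    rw [h2 k l hkl, mul_zero]
  have hsameDL : ∀ (j : ℕ) (k : ℕ),
      ⟪DL U N j (v k), DL U N j (v k)⟫ = ⟪DL U N j (v 0), DL U N j (v 0)⟫ := by
    intro j k
    rw [DL_inner, DL_inner]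
    exact Finset.sum_congr rfl fun a _ => Finset.sum_congr rfl fun b _ => by rw [h1 k]
  have hgC : ∀ u : H, ⟪u, u⟫ = ((‖u‖ ^ 2 : ℝ) : ℂ) := by
    intro u
    have hre := inner_self_eq_norm_sq (𝕜 := ℂ) u
    have him := inner_self_im (𝕜 := ℂ) u
    rw [RCLike.re_to_complex] at hre
    rw [RCLike.im_to_complex] at him
    apply Complex.ext
    · rw [hre, Complex.ofReal_re]
    · rw [him, Complex.ofReal_im]
  -- pointwise rank bound
  have hpt : ∀ j : ℕ, ‖DL U N j (v 0)‖ ^ 2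
      ≤ ∑ k : Fin (n + 1), ‖DL U N j (v (k : ℕ)) - (∑ i, c (k : ℕ) i j • DL U N j (x i))‖ ^ 2 := by
    intro j
    apply proj_bound (ξ := fun i => DL U N j (x i))
      (z := fun k : Fin (n + 1) => DL U N j (v (k : ℕ)))
      (y := fun k : Fin (n + 1) => ∑ i, c (k : ℕ) i j • DL U N j (x i))
    · intro k l hkl
      exact horthoDL j k l (fun h => hkl (Fin.val_injective h))
    · intro k
      rw [hsameDL j (k : ℕ), hgC]
    · intro k
      apply Submodule.sum_smul_mem
      intro i _
      exact Submodule.subset_span (Set.mem_range_self i)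
  -- summing over j
  have hsum1 : ∑ j ∈ Finset.range N, ‖DL U N j (v 0)‖ ^ 2 = (N : ℝ) ^ 2 := by
    rw [DL_sum_norm U N hNne, h3]
    ring
  -- termwise bound for the right side
  have hterm : ∀ (j : ℕ) (k : Fin (n + 1)),
      ‖DL U N j (v (k : ℕ)) - (∑ i, c (k : ℕ) i j • DL U N j (x i))‖ ^ 2
      ≤ 2 * ‖DL U N j (v (k : ℕ) - wv (k : ℕ))‖ ^ 2 + 2 * (C (k : ℕ)) ^ 2 := by
    intro j k
    have htri : ‖DL U N j (v (k : ℕ)) - (∑ i, c (k : ℕ) i j • DL U N j (x i))‖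
        ≤ ‖DL U N j (v (k : ℕ) - wv (k : ℕ))‖ + C (k : ℕ) := by
      calc ‖DL U N j (v (k : ℕ)) - (∑ i, c (k : ℕ) i j • DL U N j (x i))‖
          ≤ ‖DL U N j (v (k : ℕ)) - DL U N j (wv (k : ℕ))‖
            + ‖DL U N j (wv (k : ℕ)) - (∑ i, c (k : ℕ) i j • DL U N j (x i))‖ :=
            norm_sub_le_norm_sub_add_norm_sub _ _ _
        _ ≤ ‖DL U N j (v (k : ℕ) - wv (k : ℕ))‖ + C (k : ℕ) := by
            rw [DL_sub]
            exact add_le_add le_rfl (hML4 (k : ℕ) j)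
    have hnn1 : (0 : ℝ) ≤ ‖DL U N j (v (k : ℕ)) - (∑ i, c (k : ℕ) i j • DL U N j (x i))‖ :=
      norm_nonneg _
    nlinarith [sq_nonneg (‖DL U N j (v (k : ℕ) - wv (k : ℕ))‖ - C (k : ℕ)), norm_nonneg
      (DL U N j (v (k : ℕ) - wv (k : ℕ))), hCnn (k : ℕ)]
  -- assemble
  have hmain : (N : ℝ) ^ 2 ≤ 2 * (n + 1) * (N : ℝ) ^ 2 * δ ^ 2 + 2 * (N : ℝ) * B := by
    have hA : (N : ℝ) ^ 2 = ∑ j ∈ Finset.range N, ‖DL U N j (v 0)‖ ^ 2 := hsum1.symm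
    have hB1 : ∑ j ∈ Finset.range N, ‖DL U N j (v 0)‖ ^ 2
        ≤ ∑ j ∈ Finset.range N, ∑ k : Fin (n + 1),
            ‖DL U N j (v (k : ℕ)) - (∑ i, c (k : ℕ) i j • DL U N j (x i))‖ ^ 2 :=
      Finset.sum_le_sum fun j _ => hpt j
    have hB2 : ∑ j ∈ Finset.range N, ∑ k : Fin (n + 1),
        ‖DL U N j (v (k : ℕ)) - (∑ i, c (k : ℕ) i j • DL U N j (x i))‖ ^ 2
        ≤ ∑ j ∈ Finset.range N, ∑ k : Fin (n + 1),
            (2 * ‖DL U N j (v (k : ℕ) - wv (k : ℕ))‖ ^ 2 + 2 * (C (k : ℕ)) ^ 2) :=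
      Finset.sum_le_sum fun j _ => Finset.sum_le_sum fun k _ => hterm j k
    have hB3 : ∑ j ∈ Finset.range N, ∑ k : Fin (n + 1),
        (2 * ‖DL U N j (v (k : ℕ) - wv (k : ℕ))‖ ^ 2 + 2 * (C (k : ℕ)) ^ 2)
        = ∑ k : Fin (n + 1), (2 * ((N : ℝ) ^ 2 * ‖v (k : ℕ) - wv (k : ℕ)‖ ^ 2)
            + (N : ℝ) * (2 * (C (k : ℕ)) ^ 2)) := by
      rw [Finset.sum_comm]
      refine Finset.sum_congr rfl fun k _ => ?_
      rw [Finset.sum_add_distrib, ← Finset.mul_sum, DL_sum_norm U N hNne,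
        Finset.sum_const, Finset.card_range, nsmul_eq_mul]
    have hB4 : ∑ k : Fin (n + 1), (2 * ((N : ℝ) ^ 2 * ‖v (k : ℕ) - wv (k : ℕ)‖ ^ 2)
          + (N : ℝ) * (2 * (C (k : ℕ)) ^ 2))
        ≤ ∑ k : Fin (n + 1), (2 * ((N : ℝ) ^ 2 * δ ^ 2) + (N : ℝ) * (2 * (C (k : ℕ)) ^ 2)) := by
      refine Finset.sum_le_sum fun k _ => ?_
      have := hq (k : ℕ)
      have hsq : ‖v (k : ℕ) - wv (k : ℕ)‖ ^ 2 ≤ δ ^ 2 := by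
        apply sq_le_sq'
        · linarith [norm_nonneg (v (k : ℕ) - wv (k : ℕ))]
        · exact this
      nlinarith [sq_nonneg (N : ℝ)]
    have hB5 : ∑ k : Fin (n + 1), (2 * ((N : ℝ) ^ 2 * δ ^ 2) + (N : ℝ) * (2 * (C (k : ℕ)) ^ 2))
        = 2 * (n + 1) * (N : ℝ) ^ 2 * δ ^ 2 + 2 * (N : ℝ) * B := by
      have e1 : ∑ k : Fin (n + 1), ((N : ℝ) * (2 * (C (k : ℕ)) ^ 2)) = 2 * (N : ℝ) * B := by
        rw [hBdef, Finset.mul_sum]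
        exact Finset.sum_congr rfl fun k _ => by ring
      rw [Finset.sum_add_distrib, e1, Finset.sum_const, Finset.card_univ, Fintype.card_fin,
        nsmul_eq_mul]
      push_cast
      ring
    linarith [hA, hB1, hB2, le_of_eq hB3, hB4, le_of_eq hB5]
  -- final numeric contradiction
  have hδval : 2 * ((n : ℝ) + 1) * δ ^ 2 ≤ 1 / 2 := by
    have ht0 : (0 : ℝ) < (n : ℝ) + 1 := by positivity
    have ht1 : (1 : ℝ) ≤ (n : ℝ) + 1 := by
      have := Nat.cast_nonneg (α := ℝ) n
      linarith
    have heq : 2 * ((n : ℝ) + 1) * δ ^ 2 = 1 / (8 * ((n : ℝ) + 1)) := by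
      rw [hδdef]
      field_simp
      ring
    rw [heq, div_le_div_iff₀ (by positivity) (by norm_num)]
    linarith
  have hNpos' : (0 : ℝ) < N := by exact_mod_cast hNpos
  nlinarith [hmain, hδval, hNB, sq_nonneg ((N : ℝ))]

lemma inner_symm_mem {Y : Submodule ℂ H} (U : H ≃ₗᵢ[ℂ] H)
    (hinv' : ∀ y ∈ Y, U.symm y ∈ Y) :
    ∀ z ∈ Yᗮ, U z ∈ Yᗮ := by
  intro z hz
  rw [Submodule.mem_orthogonal]
  intro u hu
  have h1 : ⟪u, U z⟫ = ⟪U.symm u, z⟫ := by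
    conv_lhs => rw [← U.apply_symm_apply u]
    exact U.inner_map_map _ _
  rw [h1]
  exact (Submodule.mem_orthogonal Y z).mp hz _ (hinv' u hu)

end Stmt10Aux

open Stmt10Aux

local notation "⟪" x ", " y "⟫" => @inner ℂ _ _ x y

/-- If `U` is a unitary operator of finite multiplicity (the space is the orthogonal direct sum
of finitely many cyclic subspaces `Zᵢ = closed span {Uᵏxᵢ : k ∈ ℤ}`), `Y` is a closed reducing
subspace for `U`, and `U|Y` is unitarily equivalent to `U`, then `Y` is the whole space. -/
theorem stmt_10
    {H : Type*} [NormedAddCommGroup H] [InnerProductSpace ℂ H] [CompleteSpace H]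
    (U : H ≃ₗᵢ[ℂ] H) {n : ℕ} (x : Fin n → H)
    -- the cyclic subspaces are pairwise orthogonal
    (horth : ∀ i j, i ≠ j →
      ∀ y ∈ (Submodule.span ℂ (Set.range fun k : ℤ => (U ^ k) (x i))).topologicalClosure,
      ∀ z ∈ (Submodule.span ℂ (Set.range fun k : ℤ => (U ^ k) (x j))).topologicalClosure,
        (inner ℂ y z : ℂ) = 0)
    -- and together they span the whole space
    (hspan : (⨆ i, (Submodule.span ℂ
        (Set.range fun k : ℤ => (U ^ k) (x i))).topologicalClosure) = ⊤)
    -- `Y` is a closed subspace reducing `U`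
    (Y : Submodule ℂ H) (hYc : IsClosed (Y : Set H))
    (hinv : ∀ y ∈ Y, U y ∈ Y) (hinv' : ∀ y ∈ Y, U.symm y ∈ Y)
    -- `U|Y` is unitarily equivalent to `U`
    (hequiv : ∃ W : Y ≃ₗᵢ[ℂ] H, ∀ y : Y, (W ⟨U y, hinv y y.2⟩ : H) = U (W y)) :
    Y = ⊤ := by
  classical
  by_contra hne
  obtain ⟨W, hW⟩ := hequiv
  haveI : CompleteSpace Y := hYc.completeSpace_coe
  have hperp_ne : Yᗮ ≠ ⊥ := by
    intro h
    exact hne (Submodule.orthogonal_eq_bot_iff.mp h)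
  obtain ⟨v₀, hv₀Y, hv₀⟩ := Submodule.exists_mem_ne_zero_of_ne_bot hperp_ne
  set v : H := (‖v₀‖⁻¹ : ℂ) • v₀ with hvdef
  have hv1 : ‖v‖ = 1 := norm_smul_inv_norm hv₀
  have hvY : v ∈ Yᗮ := Submodule.smul_mem _ _ hv₀Y
  set J : H →ₗᵢ[ℂ] H := Y.subtypeₗᵢ.comp W.symm.toLinearIsometry with hJdef
  have hJY : ∀ z : H, J z ∈ Y := fun z => (W.symm z).2
  have hJU : ∀ z : H, J (U z) = U (J z) := by
    intro z
    have h := hW (W.symm z)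
    rw [LinearIsometryEquiv.apply_symm_apply] at h
    have h3 := congrArg W.symm h
    rw [LinearIsometryEquiv.symm_apply_apply] at h3
    exact (congrArg (fun t : Y => (t : H)) h3).symm
  have hJUsymm : ∀ z : H, J (U.symm z) = U.symm (J z) := by
    intro z
    have h := hJU (U.symm z)
    rw [LinearIsometryEquiv.apply_symm_apply] at h
    have h2 := congrArg U.symm h
    rw [LinearIsometryEquiv.symm_apply_apply] at h2
    exact h2.symm
  have hU1 : ∀ (m : ℤ) (z : H), (U ^ (m + 1)) z = U ((U ^ m) z) := by
    intro m z
    rw [add_comm, zpow_add_apply, zpow_one]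
  have hU2 : ∀ (m : ℤ) (z : H), (U ^ (m - 1)) z = U.symm ((U ^ m) z) := by
    intro m z
    have hm : m - 1 = (-1) + m := by ring
    rw [hm, zpow_add_apply]
    rfl
  have hJm : ∀ (m : ℤ) (z : H), J ((U ^ m) z) = (U ^ m) (J z) := by
    intro m
    induction m using Int.induction_on with
    | zero => intro z; simp
    | succ i ih =>
        intro z
        rw [hU1, hJU, ih, ← hU1]
    | pred i ih =>
        intro z
        have hm : (-(i : ℤ) - 1) = (-(i : ℤ)) - 1 := rfl
        rw [hm, hU2, hJUsymm, ih, ← hU2]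
  have hYU : ∀ z ∈ Yᗮ, U z ∈ Yᗮ := inner_symm_mem U hinv'
  have hYUsymm : ∀ z ∈ Yᗮ, U.symm z ∈ Yᗮ := by
    intro z hz
    rw [Submodule.mem_orthogonal]
    intro u hu
    have h1 : ⟪u, U.symm z⟫ = ⟪U u, z⟫ := by
      conv_rhs => rw [show z = U (U.symm z) from (U.apply_symm_apply z).symm]
      exact (U.inner_map_map _ _).symm
    rw [h1]
    exact (Submodule.mem_orthogonal Y z).mp hz _ (hinv u hu)
  have hYm : ∀ (m : ℤ), ∀ z ∈ Yᗮ, (U ^ m) z ∈ Yᗮ := by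
    intro m
    induction m using Int.induction_on with
    | zero => intro z hz; simpa using hz
    | succ i ih =>
        intro z hz
        rw [hU1]
        exact hYU _ (ih z hz)
    | pred i ih =>
        intro z hz
        have hm : (-(i : ℤ) - 1) = (-(i : ℤ)) - 1 := rfl
        rw [hm, hU2]
        exact hYUsymm _ (ih z hz)
  set vk : ℕ → H := fun k => (⇑J)^[k] v with hvkdef
  have hvk0 : vk 0 = v := rfl
  have hvkS : ∀ k, vk (k + 1) = J (vk k) := fun k => Function.iterate_succ_apply' _ _ _
  have h1 : ∀ (k : ℕ) (a b : ℤ), ⟪(U ^ a) (vk k), (U ^ b) (vk k)⟫ = ⟪(U ^ a) (vk 0), (U ^ b) (vk 0)⟫ := by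
    intro k
    induction k with
    | zero => intro a b; rfl
    | succ k ih =>
        intro a b
        rw [hvkS, ← hJm, ← hJm, LinearIsometry.inner_map_map]
        exact ih a b
  have h2' : ∀ (k d : ℕ) (a b : ℤ), ⟪(U ^ a) (vk k), (U ^ b) (vk (k + d + 1))⟫ = 0 := by
    intro k
    induction k with
    | zero =>
        intro d a b
        have hY1 : (U ^ b) (vk (0 + d + 1)) ∈ Y := by
          have e : vk (0 + d + 1) = J (vk d) := by
            rw [Nat.zero_add, hvkS]
          rw [e, ← hJm]
          exact hJY _
        have hperp1 : (U ^ a) (vk 0) ∈ Yᗮ := hYm a v hvY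
        exact Submodule.inner_left_of_mem_orthogonal hY1 hperp1
    | succ k ih =>
        intro d a b
        have e1 : vk (k + 1) = J (vk k) := hvkS k
        have e2 : vk (k + 1 + d + 1) = J (vk (k + d + 1)) := by
          have hm : k + 1 + d + 1 = (k + d + 1) + 1 := by omega
          rw [hm, hvkS]
        rw [e1, e2, ← hJm, ← hJm, LinearIsometry.inner_map_map]
        exact ih d a b
  have h2 : ∀ (k l : ℕ), k ≠ l → ∀ (a b : ℤ), ⟪(U ^ a) (vk k), (U ^ b) (vk l)⟫ = 0 := by
    intro k l hkl a b
    rcases lt_or_gt_of_ne hkl with h | h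
    · have hm : l = k + (l - k - 1) + 1 := by omega
      rw [hm]
      exact h2' k _ a b
    · have hm : k = l + (k - l - 1) + 1 := by omega
      rw [hm, inner_eq_zero_symm]
      exact h2' l _ b a
  have htot : ∀ z : H, z ∈ closure ((Submodule.span ℂ
      (Set.range (fun p : Fin n × ℤ => (U ^ p.2) (x p.1)))) : Set H) := by
    intro z
    have hle : (⨆ i, (Submodule.span ℂ (Set.range fun k : ℤ => (U ^ k) (x i))).topologicalClosure)
        ≤ (Submodule.span ℂ
            (Set.range (fun p : Fin n × ℤ => (U ^ p.2) (x p.1)))).topologicalClosure := by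
      apply iSup_le
      intro i
      apply Submodule.topologicalClosure_mono
      apply Submodule.span_mono
      rintro _ ⟨m, rfl⟩
      exact ⟨(i, m), rfl⟩
    have hz : z ∈ (⊤ : Submodule ℂ H) := Submodule.mem_top
    rw [← hspan] at hz
    exact hle hz
  have h4 : ∀ (k : ℕ) (δ : ℝ), 0 < δ → ∃ (F : Finset ℤ) (qq : Fin n → ℤ → ℂ),
      ‖vk k - ∑ i, ∑ m ∈ F, qq i m • (U ^ m) (x i)‖ ≤ δ := by
    intro k δ hδ
    obtain ⟨w, hwmem, hwd⟩ := Metric.mem_closure_iff.mp (htot (vk k)) δ hδ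
    obtain ⟨cc, hcc⟩ := Finsupp.mem_span_range_iff_exists_finsupp.mp hwmem
    refine ⟨cc.support.image Prod.snd, fun i m => cc (i, m), ?_⟩
    have hsub : cc.support ⊆ Finset.univ ×ˢ cc.support.image Prod.snd := by
      intro p hp
      rw [Finset.mem_product]
      exact ⟨Finset.mem_univ _, Finset.mem_image_of_mem Prod.snd hp⟩
    have hzero : ∀ p ∈ Finset.univ ×ˢ cc.support.image Prod.snd, p ∉ cc.support →
        cc p • (U ^ p.2) (x p.1) = 0 := by
      intro p _ hp
      rw [Finsupp.notMem_support_iff.mp hp, zero_smul]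
    have e : ∑ i, ∑ m ∈ cc.support.image Prod.snd, cc (i, m) • (U ^ m) (x i) = w := by
      rw [← Finset.sum_product']
      rw [← Finset.sum_subset hsub hzero]
      rw [← hcc]
      rfl
    rw [e]
    rw [dist_eq_norm] at hwd
    exact le_of_lt hwd
  exact main_contra U x vk h1 h2 hv1 h4
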